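/- Let k₁, …, kₙ be positive integers with k₁ + ⋯ + kₙ = 2k. Consider the incomplete weighted profile P over candidates {A, B, C} consisting of: one agent of weight 1 with total order B > C > A; one agent of weight 2k−1 with total order B > A > C; one agent of weight 2k−1 with total order C > B > A; and, for each i, one agent of weight 2kᵢ whose partial order declares only A > B. Then B is a fair weak possible winner of P (i.e., B ∈ FWP(P), meaning B wins some balanced agenda in some completion of P) if and only if the multiset {k₁, …, kₙ} can be partitioned into two parts each summing to k. -/

import Mathlib

open scoped Classical

/-- An agenda: a binary tree whose leaves are labelled with candidates. -/
inductive Agenda (α : Type) : Type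
  | leaf (a : α) : Agenda α
  | node (l r : Agenda α) : Agenda α

namespace Agenda

/-- The list of leaf labels of an agenda. -/
def leaves {α : Type} : Agenda α → List α
  | leaf a => [a]
  | node l r => leaves l ++ leaves r

/-- The list of depths of the leaves of an agenda. -/
def depths {α : Type} : Agenda α → List ℕ
  | leaf _ => [0]
  | node l r => (depths l ++ depths r).map (· + 1)

end Agenda

/-- A valid agenda: leaves labelled bijectively with the candidates. -/
def IsAgenda {α : Type} [Fintype α] (t : Agenda α) : Prop :=
  t.leaves.Nodup ∧ ∀ a : α, a ∈ t.leaves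

/-- A balanced agenda: max and min leaf depths differ by at most 1. -/
def IsBalanced {α : Type} (t : Agenda α) : Prop :=
  ∀ d₁ ∈ t.depths, ∀ d₂ ∈ t.depths, d₁ ≤ d₂ + 1

/-- A tournament: complete asymmetric directed graph on the candidates. -/
def IsTournament {α : Type} (T : α → α → Prop) : Prop :=
  (∀ a, ¬ T a a) ∧ ∀ a b : α, a ≠ b → (T a b ↔ ¬ T b a)

/-- Winner of an agenda under a tournament: each internal node is won by
whichever child's winner beats the other; the root's candidate wins. -/
noncomputable def winner {α : Type} (T : α → α → Prop) : Agenda α → α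
  | .leaf a => a
  | .node l r => if T (winner T l) (winner T r) then winner T l else winner T r

/-- Strict partial order: asymmetric and transitive. -/
def IsSPO {α : Type} (r : α → α → Prop) : Prop :=
  (∀ a b, r a b → ¬ r b a) ∧ (∀ a b c, r a b → r b c → r a c)

/-- Strict total order. -/
def IsSTO {α : Type} (r : α → α → Prop) : Prop :=
  IsSPO r ∧ ∀ a b : α, a ≠ b → r a b ∨ r b a

/-- An (incomplete) weighted profile: a finite sequence of agents, each with a
positive weight and a strict partial order, the sum of weights being odd. -/
structure Profile (α : Type) where
  agents : List (ℕ × (α → α → Prop))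
  pos : ∀ p ∈ agents, 0 < p.1
  spo : ∀ p ∈ agents, IsSPO p.2
  oddSum : Odd (agents.map Prod.fst).sum

/-- Total weight of agents preferring `a` to `b`. -/
noncomputable def prefWeight {α : Type} (P : Profile α) (a b : α) : ℕ :=
  (P.agents.map (fun p => if p.2 a b then p.1 else 0)).sum

/-- The majority graph of a profile. -/
def maj {α : Type} (P : Profile α) (a b : α) : Prop :=
  prefWeight P b a < prefWeight P a b

/-- `Q` is a completion of `P`: same weights, each agent's partial order is
replaced by a strict total order extending it. -/
def IsCompletion {α : Type} (P Q : Profile α) : Prop :=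
  List.Forall₂ (fun p q => p.1 = q.1 ∧ IsSTO q.2 ∧ ∀ a b, p.2 a b → q.2 a b)
    P.agents Q.agents

/-- `T` extends the (incomplete majority) graph `G`. -/
def Extends {α : Type} (G T : α → α → Prop) : Prop := ∀ a b, G a b → T a b

/-- `A` wins some agenda under `T`. -/
def WinsSome {α : Type} [Fintype α] (T : α → α → Prop) (A : α) : Prop :=
  ∃ t : Agenda α, IsAgenda t ∧ winner T t = A

/-- `A` wins every agenda under `T`. -/
def WinsAll {α : Type} [Fintype α] (T : α → α → Prop) (A : α) : Prop :=
  ∀ t : Agenda α, IsAgenda t → winner T t = A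

/-- `A` wins some balanced agenda under `T`. -/
def FWinsSome {α : Type} [Fintype α] (T : α → α → Prop) (A : α) : Prop :=
  ∃ t : Agenda α, IsAgenda t ∧ IsBalanced t ∧ winner T t = A

/-- `A` wins every balanced agenda under `T`. -/
def FWinsAll {α : Type} [Fintype α] (T : α → α → Prop) (A : α) : Prop :=
  ∀ t : Agenda α, IsAgenda t → IsBalanced t → winner T t = A

/-- Weak possible winner of a profile. -/
def WPp {α : Type} [Fintype α] (P : Profile α) (A : α) : Prop :=
  ∃ Q : Profile α, IsCompletion P Q ∧ WinsSome (maj Q) A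

/-- Strong possible winner of a profile. -/
def SPp {α : Type} [Fintype α] (P : Profile α) (A : α) : Prop :=
  ∀ Q : Profile α, IsCompletion P Q → WinsSome (maj Q) A

/-- Weak Condorcet winner of a profile. -/
def WCp {α : Type} [Fintype α] (P : Profile α) (A : α) : Prop :=
  ∃ Q : Profile α, IsCompletion P Q ∧ WinsAll (maj Q) A

/-- Strong Condorcet winner of a profile. -/
def SCp {α : Type} [Fintype α] (P : Profile α) (A : α) : Prop :=
  ∀ Q : Profile α, IsCompletion P Q → WinsAll (maj Q) A

/-- Weak possible winner of an incomplete majority graph. -/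
def WPg {α : Type} [Fintype α] (G : α → α → Prop) (A : α) : Prop :=
  ∃ T : α → α → Prop, IsTournament T ∧ Extends G T ∧ WinsSome T A

/-- Strong possible winner of an incomplete majority graph. -/
def SPg {α : Type} [Fintype α] (G : α → α → Prop) (A : α) : Prop :=
  ∀ T : α → α → Prop, IsTournament T → Extends G T → WinsSome T A

/-- Weak Condorcet winner of an incomplete majority graph. -/
def WCg {α : Type} [Fintype α] (G : α → α → Prop) (A : α) : Prop :=
  ∃ T : α → α → Prop, IsTournament T ∧ Extends G T ∧ WinsAll T A

/-- Strong Condorcet winner of an incomplete majority graph. -/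
def SCg {α : Type} [Fintype α] (G : α → α → Prop) (A : α) : Prop :=
  ∀ T : α → α → Prop, IsTournament T → Extends G T → WinsAll T A

/-- A profile is unweighted if every agent has weight 1. -/
def IsUnweighted {α : Type} (P : Profile α) : Prop :=
  ∀ p ∈ P.agents, p.1 = 1

/-- `Q` is the unweighted profile corresponding to `P`: each agent of
weight `k` is replaced by `k` agents of weight 1 with the same order. -/
def IsUnwVersion {α : Type} (P Q : Profile α) : Prop :=
  Q.agents = P.agents.flatMap (fun p => List.replicate p.1 (1, p.2))

/-- Fair strong Condorcet winner of a profile (balanced agendas only). -/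
def FSCp {α : Type} [Fintype α] (P : Profile α) (A : α) : Prop :=
  ∀ Q : Profile α, IsCompletion P Q → FWinsAll (maj Q) A

/-- Fair weak Condorcet winner of a profile (balanced agendas only). -/
def FWCp {α : Type} [Fintype α] (P : Profile α) (A : α) : Prop :=
  ∃ Q : Profile α, IsCompletion P Q ∧ FWinsAll (maj Q) A

/-- Fair weak possible winner of a profile (balanced agendas only). -/
def FWPp {α : Type} [Fintype α] (P : Profile α) (A : α) : Prop :=
  ∃ Q : Profile α, IsCompletion P Q ∧ FWinsSome (maj Q) A

/-- The three candidates. -/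
inductive Cand : Type
  | A | B | C
deriving DecidableEq

instance : Fintype Cand where
  elems := {Cand.A, Cand.B, Cand.C}
  complete := by intro x; cases x <;> simp

/-- The strict total order `B > C > A` ("x is preferred to y"). -/
def ordBCA : Cand → Cand → Prop :=
  fun x y => (match x with | .B => 0 | .C => 1 | .A => 2) <
             (match y with | .B => 0 | .C => 1 | .A => (2:ℕ))

/-- The strict total order `B > A > C`. -/
def ordBAC : Cand → Cand → Prop :=
  fun x y => (match x with | .B => 0 | .A => 1 | .C => 2) <
             (match y with | .B => 0 | .A => 1 | .C => (2:ℕ))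

/-- The strict total order `C > B > A`. -/
def ordCBA : Cand → Cand → Prop :=
  fun x y => (match x with | .C => 0 | .B => 1 | .A => 2) <
             (match y with | .C => 0 | .B => 1 | .A => (2:ℕ))

/-- The incomplete preference declaring only `A > B`. -/
def onlyAB : Cand → Cand → Prop := fun x y => x = Cand.A ∧ y = Cand.B

/-- The profile of the reduction: one agent of weight `1` voting `B>C>A`,
one of weight `2k-1` voting `B>A>C`, one of weight `2k-1` voting `C>B>A`,
and for each `kᵢ` in `ks` one agent of weight `2kᵢ` declaring only `A>B`. -/
def P17 (ks : List ℕ) (k : ℕ) (hk : 0 < k) (hpos : ∀ x ∈ ks, 0 < x)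
    (hsum : ks.sum = 2 * k) : Profile Cand where
  agents :=
    (1, ordBCA) :: (2 * k - 1, ordBAC) :: (2 * k - 1, ordCBA) ::
      ks.map (fun ki => (2 * ki, onlyAB))
  pos := by
    intro p hp
    simp only [List.mem_cons, List.mem_map] at hp
    rcases hp with rfl | rfl | rfl | ⟨ki, hki, rfl⟩
    · norm_num
    · simp only; omega
    · simp only; omega
    · have := hpos ki hki; simp only; omega
  spo := by
    intro p hp
    simp only [List.mem_cons, List.mem_map] at hp
    rcases hp with rfl | rfl | rfl | ⟨ki, hki, rfl⟩
    · exact ⟨fun a b h h' => absurd h' (Nat.lt_asymm h),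
        fun a b c h h' => Nat.lt_trans h h'⟩
    · exact ⟨fun a b h h' => absurd h' (Nat.lt_asymm h),
        fun a b c h h' => Nat.lt_trans h h'⟩
    · exact ⟨fun a b h h' => absurd h' (Nat.lt_asymm h),
        fun a b c h h' => Nat.lt_trans h h'⟩
    · constructor
      · rintro a b ⟨rfl, rfl⟩ ⟨h, -⟩; cases h
      · rintro a b c ⟨rfl, rfl⟩ ⟨h, -⟩; cases h
  oddSum := by
    have hmap : ∀ l : List ℕ,
        ((l.map (fun ki => ((2 * ki : ℕ), onlyAB))).map Prod.fst).sum
          = 2 * l.sum := by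
      intro l
      rw [List.map_map]
      induction l with
      | nil => simp
      | cons a t ih => simp_all [Function.comp, Nat.mul_add]
    refine ⟨4 * k - 1, ?_⟩
    simp only [List.map_cons, List.sum_cons]
    rw [hmap ks, hsum]
    omega

/-! ### Auxiliary material for the proof of `stmt18`. -/

namespace Stmt18Aux

/-- The strict total order `A > B > C`. -/
def ordABC : Cand → Cand → Prop :=
  fun x y => (match x with | .A => 0 | .B => 1 | .C => 2) <
             (match y with | .A => 0 | .B => 1 | .C => (2:ℕ))

/-- The strict total order `C > A > B`. -/
def ordCAB : Cand → Cand → Prop :=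
  fun x y => (match x with | .C => 0 | .A => 1 | .B => 2) <
             (match y with | .C => 0 | .A => 1 | .B => (2:ℕ))

lemma sto_rank (f : Cand → ℕ) (hf : ∀ a b : Cand, a ≠ b → f a ≠ f b) :
    IsSTO (fun x y => f x < f y) :=
  ⟨⟨fun _ _ h h' => Nat.lt_asymm h h', fun _ _ _ h h' => Nat.lt_trans h h'⟩,
   fun a b hab => (hf a b hab).lt_or_gt⟩

lemma sto_ordABC : IsSTO ordABC := sto_rank _ (by decide)
lemma sto_ordCAB : IsSTO ordCAB := sto_rank _ (by decide)
lemma sto_ordBCA : IsSTO ordBCA := sto_rank _ (by decide)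
lemma sto_ordBAC : IsSTO ordBAC := sto_rank _ (by decide)
lemma sto_ordCBA : IsSTO ordCBA := sto_rank _ (by decide)

/-- Sum of weights of agents (given as a raw list) preferring `a` to `b`. -/
noncomputable def tsum (qs : List (ℕ × (Cand → Cand → Prop))) (a b : Cand) : ℕ :=
  (qs.map (fun p => if p.2 a b then p.1 else 0)).sum

lemma tsum_nil (a b : Cand) : tsum [] a b = 0 := rfl

lemma tsum_cons (q : ℕ × (Cand → Cand → Prop)) (qs : List (ℕ × (Cand → Cand → Prop)))
    (a b : Cand) : tsum (q :: qs) a b = (if q.2 a b then q.1 else 0) + tsum qs a b := by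
  simp [tsum]

lemma leaves_pos : ∀ t : Agenda Cand, 0 < t.leaves.length
  | .leaf a => by simp [Agenda.leaves]
  | .node l r => by
      have := leaves_pos l
      simp [Agenda.leaves]
      omega

lemma leaf_of_len1 : ∀ t : Agenda Cand, t.leaves.length = 1 → ∃ a, t = .leaf a
  | .leaf a, _ => ⟨a, rfl⟩
  | .node l r, h => by
      exfalso
      have := leaves_pos l
      have := leaves_pos r
      simp [Agenda.leaves] at h
      omega

lemma shape3 (t : Agenda Cand) (h : t.leaves.length = 3) :
    (∃ x y z, t = .node (.leaf x) (.node (.leaf y) (.leaf z))) ∨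
    (∃ x y z, t = .node (.node (.leaf x) (.leaf y)) (.leaf z)) := by
  match t with
  | .leaf a => simp [Agenda.leaves] at h
  | .node (.leaf x) (.leaf y) => simp [Agenda.leaves] at h
  | .node (.leaf x) (.node r1 r2) =>
      left
      have h1 := leaves_pos r1
      have h2 := leaves_pos r2
      simp [Agenda.leaves] at h
      obtain ⟨y, rfl⟩ := leaf_of_len1 r1 (by omega)
      obtain ⟨z, rfl⟩ := leaf_of_len1 r2 (by omega)
      exact ⟨x, y, z, rfl⟩
  | .node (.node l1 l2) (.leaf z) =>
      right
      have h1 := leaves_pos l1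
      have h2 := leaves_pos l2
      simp [Agenda.leaves] at h
      obtain ⟨x, rfl⟩ := leaf_of_len1 l1 (by omega)
      obtain ⟨y, rfl⟩ := leaf_of_len1 l2 (by omega)
      exact ⟨x, y, z, rfl⟩
  | .node (.node l1 l2) (.node r1 r2) =>
      exfalso
      have h1 := leaves_pos l1
      have h2 := leaves_pos l2
      have h3 := leaves_pos r1
      have h4 := leaves_pos r2
      simp [Agenda.leaves] at h
      omega

lemma winner_anal (T : Cand → Cand → Prop)
    (hAB : T Cand.A Cand.B) (hnBA : ¬ T Cand.B Cand.A)
    (hACt : T Cand.A Cand.C ∨ T Cand.C Cand.A) (hACa : ¬(T Cand.A Cand.C ∧ T Cand.C Cand.A))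
    (hBCt : T Cand.B Cand.C ∨ T Cand.C Cand.B) (hBCa : ¬(T Cand.B Cand.C ∧ T Cand.C Cand.B))
    (t : Agenda Cand) (ht : IsAgenda t) (hw : winner T t = Cand.B) :
    T Cand.B Cand.C ∧ T Cand.C Cand.A := by
  have hle : t.leaves.length ≤ 3 := by
    have := ht.1.length_le_card
    have hc : Fintype.card Cand = 3 := by decide
    simpa [hc] using this
  have hge : 3 ≤ t.leaves.length := by
    have hsub : List.Subperm [Cand.A, Cand.B, Cand.C] t.leaves :=
      List.subperm_of_subset (by decide) (by intro a _; exact ht.2 a)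
    simpa using hsub.length_le
  obtain ⟨hnd, -⟩ := ht
  rcases shape3 t (by omega) with ⟨x, y, z, rfl⟩ | ⟨x, y, z, rfl⟩ <;>
    cases x <;> cases y <;> cases z <;>
      first
        | exact absurd hnd (by decide)
        | (repeat rw [winner] at hw
           split_ifs at hw <;>
             first
               | exact absurd hw (by decide)
               | tauto)

/-- Tail analysis for the reverse direction. -/
lemma rev_tail : ∀ (ks : List ℕ) (qs : List (ℕ × (Cand → Cand → Prop))),
    List.Forall₂ (fun (p q : ℕ × (Cand → Cand → Prop)) => p.1 = q.1 ∧ IsSTO q.2 ∧ ∀ a b, p.2 a b → q.2 a b)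
      (ks.map (fun ki => (2 * ki, onlyAB))) qs →
    ∃ l₁ l₂ : List ℕ, ks.Perm (l₁ ++ l₂) ∧
      tsum qs Cand.B Cand.C = 2 * l₁.sum ∧ tsum qs Cand.C Cand.B = 2 * l₂.sum ∧
      tsum qs Cand.B Cand.C ≤ tsum qs Cand.A Cand.C ∧
      tsum qs Cand.C Cand.A ≤ tsum qs Cand.C Cand.B ∧
      tsum qs Cand.A Cand.C + tsum qs Cand.C Cand.A = 2 * ks.sum ∧
      tsum qs Cand.A Cand.B = 2 * ks.sum ∧ tsum qs Cand.B Cand.A = 0 := by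
  intro ks
  induction ks with
  | nil =>
      intro qs h
      rw [List.map_nil, List.forall₂_nil_left_iff] at h
      subst h
      exact ⟨[], [], List.Perm.refl _, by simp [tsum_nil]⟩
  | cons ki ks' ih =>
      intro qs h
      rw [List.map_cons, List.forall₂_cons_left_iff] at h
      obtain ⟨q, qs', ⟨hw, hsto, hext⟩, hqs', rfl⟩ := h
      obtain ⟨⟨hasym, htrans⟩, htotal⟩ := hsto
      have hwq : q.1 = 2 * ki := hw.symm
      have hqAB : q.2 Cand.A Cand.B := hext _ _ ⟨rfl, rfl⟩
      have hnBAq : ¬ q.2 Cand.B Cand.A := hasym _ _ hqAB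
      obtain ⟨l₁, l₂, hperm, e1, e2, i1, i2, es, eAB, eBA⟩ := ih qs' hqs'
      by_cases hBC : q.2 Cand.B Cand.C
      · have hAC : q.2 Cand.A Cand.C := htrans _ _ _ hqAB hBC
        have hnCB : ¬ q.2 Cand.C Cand.B := hasym _ _ hBC
        have hnCA : ¬ q.2 Cand.C Cand.A := fun h' => hnCB (htrans _ _ _ h' hqAB)
        refine ⟨ki :: l₁, l₂, hperm.cons ki, ?_⟩
        simp only [tsum_cons, if_pos hBC, if_pos hAC, if_pos hqAB, if_neg hnCB, if_neg hnCA,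
          if_neg hnBAq, List.sum_cons]
        omega
      · have hCB : q.2 Cand.C Cand.B := (htotal _ _ (by decide)).resolve_right hBC
        refine ⟨l₁, ki :: l₂, (hperm.cons ki).trans List.perm_middle.symm, ?_⟩
        by_cases hAC : q.2 Cand.A Cand.C
        · have hnCA : ¬ q.2 Cand.C Cand.A := hasym _ _ hAC
          simp only [tsum_cons, if_pos hCB, if_pos hAC, if_pos hqAB, if_neg hBC, if_neg hnCA,
            if_neg hnBAq, List.sum_cons]
          omega
        · have hCA : q.2 Cand.C Cand.A := (htotal _ _ (by decide)).resolve_left hAC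
          simp only [tsum_cons, if_pos hCB, if_pos hCA, if_pos hqAB, if_neg hBC, if_neg hAC,
            if_neg hnBAq, List.sum_cons]
          omega

/-- Tail construction for the forward direction. -/
lemma forward_tail {s ks : List ℕ} (h : s.Sublist ks) (hpos : ∀ x ∈ ks, 0 < x) :
    ∃ qs : List (ℕ × (Cand → Cand → Prop)),
      List.Forall₂ (fun (p q : ℕ × (Cand → Cand → Prop)) => p.1 = q.1 ∧ IsSTO q.2 ∧ ∀ a b, p.2 a b → q.2 a b)
        (ks.map (fun ki => (2 * ki, onlyAB))) qs ∧
      (∀ q ∈ qs, 0 < q.1) ∧ (∀ q ∈ qs, IsSTO q.2) ∧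
      (qs.map Prod.fst).sum = 2 * ks.sum ∧
      tsum qs Cand.B Cand.C = 2 * s.sum ∧
      tsum qs Cand.A Cand.C = 2 * s.sum ∧
      tsum qs Cand.C Cand.B + 2 * s.sum = 2 * ks.sum ∧
      tsum qs Cand.C Cand.A + 2 * s.sum = 2 * ks.sum ∧
      tsum qs Cand.B Cand.A = 0 := by
  induction h with
  | slnil => exact ⟨[], List.Forall₂.nil, by simp, by simp, by simp, by simp [tsum_nil]⟩
  | @cons s' ks' a h ih =>
      obtain ⟨qs, hf, hp, hs, hw, t1, t2, t3, t4, t5⟩ :=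
        ih (fun x hx => hpos x (List.mem_cons_of_mem a hx))
      have ha : 0 < a := hpos a (List.mem_cons_self)
      refine ⟨(2 * a, ordCAB) :: qs,
        List.Forall₂.cons ⟨rfl, sto_ordCAB, ?_⟩ hf, ?_, ?_, ?_, ?_⟩
      · rintro x y ⟨rfl, rfl⟩
        show (1:ℕ) < 2
        norm_num
      · intro q hq
        rcases List.mem_cons.mp hq with rfl | hq
        · simpa using ha
        · exact hp q hq
      · intro q hq
        rcases List.mem_cons.mp hq with rfl | hq
        · exact sto_ordCAB
        · exact hs q hq
      · simp only [List.map_cons, List.sum_cons, hw, List.sum_cons]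
        ring
      · have c1 : ¬ ordCAB Cand.B Cand.C := by norm_num [ordCAB]
        have c2 : ordCAB Cand.C Cand.B := by norm_num [ordCAB]
        have c3 : ¬ ordCAB Cand.A Cand.C := by norm_num [ordCAB]
        have c4 : ordCAB Cand.C Cand.A := by norm_num [ordCAB]
        have c6 : ¬ ordCAB Cand.B Cand.A := by norm_num [ordCAB]
        simp only [tsum_cons, if_pos c2, if_pos c4, if_neg c1, if_neg c3, if_neg c6,
          List.sum_cons]
        refine ⟨by omega, by omega, by omega, by omega, by omega⟩
  | @cons_cons s' ks' a h ih =>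
      obtain ⟨qs, hf, hp, hs, hw, t1, t2, t3, t4, t5⟩ :=
        ih (fun x hx => hpos x (List.mem_cons_of_mem a hx))
      have ha : 0 < a := hpos a (List.mem_cons_self)
      refine ⟨(2 * a, ordABC) :: qs,
        List.Forall₂.cons ⟨rfl, sto_ordABC, ?_⟩ hf, ?_, ?_, ?_, ?_⟩
      · rintro x y ⟨rfl, rfl⟩
        show (0:ℕ) < 1
        norm_num
      · intro q hq
        rcases List.mem_cons.mp hq with rfl | hq
        · simpa using ha
        · exact hp q hq
      · intro q hq
        rcases List.mem_cons.mp hq with rfl | hq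
        · exact sto_ordABC
        · exact hs q hq
      · simp only [List.map_cons, List.sum_cons, hw, List.sum_cons]
        ring
      · have c1 : ordABC Cand.B Cand.C := by norm_num [ordABC]
        have c2 : ¬ ordABC Cand.C Cand.B := by norm_num [ordABC]
        have c3 : ordABC Cand.A Cand.C := by norm_num [ordABC]
        have c4 : ¬ ordABC Cand.C Cand.A := by norm_num [ordABC]
        have c6 : ¬ ordABC Cand.B Cand.A := by norm_num [ordABC]
        simp only [tsum_cons, if_pos c1, if_pos c3, if_neg c2, if_neg c4, if_neg c6,
          List.sum_cons]
        refine ⟨by omega, by omega, by omega, by omega, by omega⟩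

end Stmt18Aux

open Stmt18Aux in
/-- `B` is a fair weak possible winner (wins some balanced
agenda in some completion) of the reduction profile iff the multiset `ks`
can be partitioned into two parts each summing to `k`. -/
theorem stmt18 (ks : List ℕ) (k : ℕ) (hk : 0 < k) (hpos : ∀ x ∈ ks, 0 < x)
    (hsum : ks.sum = 2 * k) :
    FWPp (P17 ks k hk hpos hsum) Cand.B ↔
      ∃ l₁ l₂ : List ℕ, ks.Perm (l₁ ++ l₂) ∧ l₁.sum = k ∧ l₂.sum = k := by
  constructor
  · rintro ⟨Q, hcomp, t, hAg, hBal, hwin⟩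
    have hPa : (P17 ks k hk hpos hsum).agents
        = (1, ordBCA) :: (2 * k - 1, ordBAC) :: (2 * k - 1, ordCBA) ::
          ks.map (fun ki => (2 * ki, onlyAB)) := rfl
    unfold IsCompletion at hcomp
    rw [hPa, List.forall₂_cons_left_iff] at hcomp
    obtain ⟨q1, u1, hq1, hcomp, hu1⟩ := hcomp
    rw [List.forall₂_cons_left_iff] at hcomp
    obtain ⟨q2, u2, hq2, hcomp, hu2⟩ := hcomp
    rw [List.forall₂_cons_left_iff] at hcomp
    obtain ⟨q3, qs, hq3, hqs, hu3⟩ := hcomp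
    subst hu3; subst hu2
    obtain ⟨hw1, hsto1, hext1⟩ := hq1
    obtain ⟨hw2, hsto2, hext2⟩ := hq2
    obtain ⟨hw3, hsto3, hext3⟩ := hq3
    have w1 : q1.1 = 1 := hw1.symm
    have w2 : q2.1 = 2 * k - 1 := hw2.symm
    have w3 : q3.1 = 2 * k - 1 := hw3.symm
    -- facts about the three fixed (total) orders in the completion
    have h1BC : q1.2 Cand.B Cand.C := hext1 _ _ (by norm_num [ordBCA])
    have h1CA : q1.2 Cand.C Cand.A := hext1 _ _ (by norm_num [ordBCA])
    have h1BA : q1.2 Cand.B Cand.A := hext1 _ _ (by norm_num [ordBCA])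
    have h1nCB : ¬ q1.2 Cand.C Cand.B := hsto1.1.1 _ _ h1BC
    have h1nAC : ¬ q1.2 Cand.A Cand.C := hsto1.1.1 _ _ h1CA
    have h1nAB : ¬ q1.2 Cand.A Cand.B := hsto1.1.1 _ _ h1BA
    have h2BA : q2.2 Cand.B Cand.A := hext2 _ _ (by norm_num [ordBAC])
    have h2AC : q2.2 Cand.A Cand.C := hext2 _ _ (by norm_num [ordBAC])
    have h2BC : q2.2 Cand.B Cand.C := hext2 _ _ (by norm_num [ordBAC])
    have h2nAB : ¬ q2.2 Cand.A Cand.B := hsto2.1.1 _ _ h2BA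
    have h2nCA : ¬ q2.2 Cand.C Cand.A := hsto2.1.1 _ _ h2AC
    have h2nCB : ¬ q2.2 Cand.C Cand.B := hsto2.1.1 _ _ h2BC
    have h3CB : q3.2 Cand.C Cand.B := hext3 _ _ (by norm_num [ordCBA])
    have h3BA : q3.2 Cand.B Cand.A := hext3 _ _ (by norm_num [ordCBA])
    have h3CA : q3.2 Cand.C Cand.A := hext3 _ _ (by norm_num [ordCBA])
    have h3nBC : ¬ q3.2 Cand.B Cand.C := hsto3.1.1 _ _ h3CB
    have h3nAB : ¬ q3.2 Cand.A Cand.B := hsto3.1.1 _ _ h3BA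
    have h3nAC : ¬ q3.2 Cand.A Cand.C := hsto3.1.1 _ _ h3CA
    -- the six relevant pairwise weights
    have hpref : ∀ a b, prefWeight Q a b = tsum Q.agents a b := fun _ _ => rfl
    have eBC : prefWeight Q Cand.B Cand.C = 2 * k + tsum qs Cand.B Cand.C := by
      rw [hpref, hu1, tsum_cons, tsum_cons, tsum_cons,
        if_pos h1BC, if_pos h2BC, if_neg h3nBC, w1, w2]
      omega
    have eCB : prefWeight Q Cand.C Cand.B = (2 * k - 1) + tsum qs Cand.C Cand.B := by
      rw [hpref, hu1, tsum_cons, tsum_cons, tsum_cons,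
        if_neg h1nCB, if_neg h2nCB, if_pos h3CB, w3]
      omega
    have eAC : prefWeight Q Cand.A Cand.C = (2 * k - 1) + tsum qs Cand.A Cand.C := by
      rw [hpref, hu1, tsum_cons, tsum_cons, tsum_cons,
        if_neg h1nAC, if_pos h2AC, if_neg h3nAC, w2]
      omega
    have eCA : prefWeight Q Cand.C Cand.A = 2 * k + tsum qs Cand.C Cand.A := by
      rw [hpref, hu1, tsum_cons, tsum_cons, tsum_cons,
        if_pos h1CA, if_neg h2nCA, if_pos h3CA, w1, w3]
      omega
    have eAB : prefWeight Q Cand.A Cand.B = tsum qs Cand.A Cand.B := by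
      rw [hpref, hu1, tsum_cons, tsum_cons, tsum_cons,
        if_neg h1nAB, if_neg h2nAB, if_neg h3nAB]
      omega
    have eBA : prefWeight Q Cand.B Cand.A = (4 * k - 1) + tsum qs Cand.B Cand.A := by
      rw [hpref, hu1, tsum_cons, tsum_cons, tsum_cons,
        if_pos h1BA, if_pos h2BA, if_pos h3BA, w1, w2, w3]
      omega
    obtain ⟨l₁, l₂, hperm, e1, e2, i1, i2, es, tAB, tBA⟩ := rev_tail ks qs hqs
    have hsum12 : l₁.sum + l₂.sum = 2 * k := by
      have h' := hperm.sum_eq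
      rw [List.sum_append] at h'
      omega
    -- tournament facts for `maj Q`
    have hTab : maj Q Cand.A Cand.B := by
      simp only [maj, eAB, eBA, tAB, tBA, hsum]
      omega
    have hTnba : ¬ maj Q Cand.B Cand.A := by
      simp only [maj, eAB, eBA, tAB, tBA, hsum]
      omega
    have hACt : maj Q Cand.A Cand.C ∨ maj Q Cand.C Cand.A := by
      simp only [maj, eAC, eCA]
      omega
    have hACa : ¬ (maj Q Cand.A Cand.C ∧ maj Q Cand.C Cand.A) := by
      simp only [maj, eAC, eCA]
      omega
    have hBCt : maj Q Cand.B Cand.C ∨ maj Q Cand.C Cand.B := by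
      simp only [maj, eBC, eCB, e1, e2]
      omega
    have hBCa : ¬ (maj Q Cand.B Cand.C ∧ maj Q Cand.C Cand.B) := by
      simp only [maj, eBC, eCB, e1, e2]
      omega
    obtain ⟨hTbc, hTca⟩ := winner_anal (maj Q) hTab hTnba hACt hACa hBCt hBCa t hAg hwin
    simp only [maj, eBC, eCB, eAC, eCA] at hTbc hTca
    exact ⟨l₁, l₂, hperm, by omega, by omega⟩
  · rintro ⟨l₁, l₂, hperm, h1, h2⟩
    obtain ⟨s, hs_perm, hs_sub⟩ :=
      ((List.sublist_append_left l₁ l₂).subperm).trans hperm.symm.subperm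
    have hssum : s.sum = k := by rw [hs_perm.sum_eq, h1]
    obtain ⟨qs, hf, hp, hstoqs, hwsum, t1, t2, t3, t4, t5⟩ := forward_tail hs_sub hpos
    set lst : List (ℕ × (Cand → Cand → Prop)) :=
      (1, ordBCA) :: (2 * k - 1, ordBAC) :: (2 * k - 1, ordCBA) :: qs with hlst
    have hposQ : ∀ p ∈ lst, 0 < p.1 := by
      intro p hp'
      rcases List.mem_cons.mp hp' with rfl | hp'
      · norm_num
      rcases List.mem_cons.mp hp' with rfl | hp'
      · simp only; omega
      rcases List.mem_cons.mp hp' with rfl | hp'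
      · simp only; omega
      · exact hp p hp'
    have hspoQ : ∀ p ∈ lst, IsSPO p.2 := by
      intro p hp'
      rcases List.mem_cons.mp hp' with rfl | hp'
      · exact sto_ordBCA.1
      rcases List.mem_cons.mp hp' with rfl | hp'
      · exact sto_ordBAC.1
      rcases List.mem_cons.mp hp' with rfl | hp'
      · exact sto_ordCBA.1
      · exact (hstoqs p hp').1
    have hoddQ : Odd ((lst.map Prod.fst).sum) := by
      simp only [hlst, List.map_cons, List.sum_cons, hwsum, hsum]
      exact ⟨4 * k - 1, by omega⟩
    refine ⟨⟨lst, hposQ, hspoQ, hoddQ⟩, ?_, ?_⟩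
    · exact List.Forall₂.cons ⟨rfl, sto_ordBCA, fun a b h => h⟩
        (List.Forall₂.cons ⟨rfl, sto_ordBAC, fun a b h => h⟩
          (List.Forall₂.cons ⟨rfl, sto_ordCBA, fun a b h => h⟩ hf))
    · -- B wins the balanced agenda (B, (A, C))
      have c1 : ordBCA Cand.B Cand.C := by norm_num [ordBCA]
      have c2 : ordBAC Cand.B Cand.C := by norm_num [ordBAC]
      have c3 : ¬ ordCBA Cand.B Cand.C := by norm_num [ordCBA]
      have c4 : ¬ ordBCA Cand.C Cand.B := by norm_num [ordBCA]
      have c5 : ¬ ordBAC Cand.C Cand.B := by norm_num [ordBAC]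
      have c6 : ordCBA Cand.C Cand.B := by norm_num [ordCBA]
      have c7 : ¬ ordBCA Cand.A Cand.C := by norm_num [ordBCA]
      have c8 : ordBAC Cand.A Cand.C := by norm_num [ordBAC]
      have c9 : ¬ ordCBA Cand.A Cand.C := by norm_num [ordCBA]
      have c10 : ordBCA Cand.C Cand.A := by norm_num [ordBCA]
      have c11 : ¬ ordBAC Cand.C Cand.A := by norm_num [ordBAC]
      have c12 : ordCBA Cand.C Cand.A := by norm_num [ordCBA]
      have hBCmaj : maj ⟨lst, hposQ, hspoQ, hoddQ⟩ Cand.B Cand.C := by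
        show tsum lst Cand.C Cand.B < tsum lst Cand.B Cand.C
        simp only [hlst, tsum_cons, if_pos c1, if_pos c2, if_neg c3, if_neg c4, if_neg c5,
          if_pos c6]
        omega
      have hnACmaj : ¬ maj ⟨lst, hposQ, hspoQ, hoddQ⟩ Cand.A Cand.C := by
        show ¬ tsum lst Cand.C Cand.A < tsum lst Cand.A Cand.C
        simp only [hlst, tsum_cons, if_neg c7, if_pos c8, if_neg c9, if_pos c10, if_neg c11,
          if_pos c12]
        omega
      refine ⟨Agenda.node (.leaf Cand.B) (.node (.leaf Cand.A) (.leaf Cand.C)),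
        ⟨by decide, by decide⟩, ?_, ?_⟩
      · intro d₁ h₁ d₂ h₂
        simp [Agenda.depths] at h₁ h₂
        rcases h₁ with rfl | rfl | rfl <;> rcases h₂ with rfl | rfl | rfl <;> omega
      repeat rw [winner]
      rw [if_neg hnACmaj, if_pos hBCmaj]
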